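/- Let w, n be natural numbers with n ≥ 1. Let x, y : Fin n → BitVec w be XOR-sharings of values X = ⨁_i x_i and Y = ⨁_i y_i, and let β : Fin n → Bool be a sharing of a bit b = xor of the β_i. Set m_i := (if β_i then BitVec.allOnes w else 0). Let r : (i j : Fin n) → BitVec w be arbitrary, and define the ISW-AND output shares a_i := (y_i &&& m_i) ^^^ (⨁_{j<i} (r j i ^^^ (y_i &&& m_j) ^^^ (y_j &&& m_i))) ^^^ (⨁_{j>i} r i j). Let d : Fin n → BitVec w be any vector with ⨁_i d_i = 0, and set s_i := x_i ^^^ a_i ^^^ d_i. Then ⨁_i s_i = if b then X ^^^ Y else X. (Functional correctness of the SecCondAdd gadget: for any randomness, its output is an XOR-sharing of X + b·Y.) -/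

import Mathlib

/-- XOR-sum of a tuple of bit vectors. -/
def xorSum {w n : ℕ} (f : Fin n → BitVec w) : BitVec w :=
  (List.ofFn f).foldr (· ^^^ ·) 0

/-- XOR (parity) of a tuple of Booleans. -/
def xorFoldBool {n : ℕ} (f : Fin n → Bool) : Bool :=
  (List.ofFn f).foldr xor false

namespace SecCondAux

variable {w : ℕ}

/-- Embedding of bitvectors into `Fin w → ZMod 2`. -/
def e (v : BitVec w) : Fin w → ZMod 2 := fun k => if v.getLsbD k.val then 1 else 0

lemma e_zero : e (0 : BitVec w) = 0 := by
  funext k; simp [e]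

lemma e_one : e (BitVec.allOnes w) = 1 := by
  funext k; simp [e, k.isLt]

lemma e_xor (a b : BitVec w) : e (a ^^^ b) = e a + e b := by
  funext k
  simp only [e, BitVec.getLsbD_xor, Pi.add_apply]
  cases h1 : a.getLsbD k.val <;> cases h2 : b.getLsbD k.val <;> simp <;> decide

lemma e_and (a b : BitVec w) : e (a &&& b) = e a * e b := by
  funext k
  simp only [e, BitVec.getLsbD_and, Pi.mul_apply]
  cases h1 : a.getLsbD k.val <;> cases h2 : b.getLsbD k.val <;> simp

lemma e_inj {a b : BitVec w} (h : e a = e b) : a = b := by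
  apply BitVec.eq_of_getLsbD_eq
  intro i0 hi0
  obtain ⟨i, rfl⟩ : ∃ i : Fin w, i.val = i0 := ⟨⟨i0, hi0⟩, rfl⟩
  have := congrFun h i
  simp only [e] at this
  cases h1 : a.getLsbD i.val <;> cases h2 : b.getLsbD i.val <;>
    simp only [h1, h2, Bool.false_eq_true, ite_false, ite_true] at this ⊢ <;> exact absurd this (by decide)

lemma xorSum_succ {n : ℕ} (f : Fin (n+1) → BitVec w) :
    xorSum f = f 0 ^^^ xorSum (fun i => f i.succ) := by
  simp [xorSum, List.ofFn_succ]

lemma e_xorSum {n : ℕ} (f : Fin n → BitVec w) :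
    e (xorSum f) = ∑ i, e (f i) := by
  induction n with
  | zero => simp only [xorSum, List.ofFn_zero, List.foldr_nil]; rw [e_zero]; simp
  | succ n ih =>
    rw [xorSum_succ, e_xor, ih, Fin.sum_univ_succ]

lemma xorFoldBool_succ {n : ℕ} (f : Fin (n+1) → Bool) :
    xorFoldBool f = xor (f 0) (xorFoldBool (fun i => f i.succ)) := by
  simp [xorFoldBool, List.ofFn_succ]

lemma bool_parity {n : ℕ} (f : Fin n → Bool) :
    (∑ i, (if f i then (1 : ZMod 2) else 0)) = if xorFoldBool f then 1 else 0 := by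
  induction n with
  | zero => simp [xorFoldBool]
  | succ n ih =>
    rw [Fin.sum_univ_succ, xorFoldBool_succ, ih]
    cases h : f 0 <;> cases h2 : xorFoldBool (fun i => f i.succ) <;> simp <;> decide

lemma add_self (x : Fin w → ZMod 2) : x + x = 0 := by
  funext k; exact CharTwo.add_self_eq_zero _

end SecCondAux

open SecCondAux

namespace SecCondAux

lemma e_ite {w : ℕ} (P : Prop) [Decidable P] (v : BitVec w) :
    e (if P then v else 0) = if P then e v else 0 := by
  split <;> [rfl; (funext k; simp [e])]

lemma trichot {n w : ℕ} (f : Fin n → Fin n → (Fin w → ZMod 2)) :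
    ∑ i, ∑ j, f i j = (∑ i, f i i)
      + (∑ i, ∑ j, if j < i then f i j else 0)
      + (∑ i, ∑ j, if i < j then f i j else 0) := by
  have h1 : ∀ i, ∑ j, f i j = f i i + (∑ j, if j < i then f i j else 0)
      + (∑ j, if i < j then f i j else 0) := by
    intro i
    have key : ∀ j : Fin n, f i j = (if j = i then f i j else 0)
        + (if j < i then f i j else 0) + (if i < j then f i j else 0) := by
      intro j
      rcases lt_trichotomy j i with h | h | h
      · simp [h, h.ne, asymm h]
      · simp [h, lt_irrefl]
      · simp [h, h.ne', asymm h]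
    rw [Finset.sum_congr rfl (fun j _ => key j), Finset.sum_add_distrib,
      Finset.sum_add_distrib, Finset.sum_ite_eq' Finset.univ i (f i)]
    simp
  rw [Finset.sum_congr rfl (fun i _ => h1 i), Finset.sum_add_distrib,
    Finset.sum_add_distrib]

end SecCondAux

open SecCondAux

/-- **Functional correctness of the `SecCondAdd` gadget.**
Given XOR-sharings `x` of `X`, `y` of `Y` and a Boolean sharing `β` of a bit `b`,
extend each share of `b` to `w` bits (`m i`), compute the ISW-AND output shares `a`
with arbitrary randomness `r`, XOR them into the shares of `x`, and refresh with any
`d` XOR-summing to zero.  The result is an XOR-sharing of `if b then X ^^^ Y else X`. -/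
theorem stmt_2 (w n : ℕ) (hn : 1 ≤ n)
    (x y : Fin n → BitVec w) (β : Fin n → Bool)
    (r : Fin n → Fin n → BitVec w)
    (m : Fin n → BitVec w) (hm : ∀ i, m i = if β i then BitVec.allOnes w else 0)
    (a : Fin n → BitVec w)
    (ha : ∀ i, a i = (y i &&& m i)
        ^^^ xorSum (fun j => if j < i then r j i ^^^ (y i &&& m j) ^^^ (y j &&& m i) else 0)
        ^^^ xorSum (fun j => if i < j then r i j else 0))
    (d : Fin n → BitVec w) (hd : xorSum d = 0)
    (s : Fin n → BitVec w) (hs : ∀ i, s i = x i ^^^ a i ^^^ d i) :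
    xorSum s = if xorFoldBool β then xorSum x ^^^ xorSum y else xorSum x := by

  apply e_inj
  -- sum of m shares
  have hM : (∑ i, e (m i)) = if xorFoldBool β then 1 else 0 := by
    have step : ∀ i, e (m i) = if β i then (1 : Fin w → ZMod 2) else 0 := by
      intro i; rw [hm i]; split
      · exact e_one
      · exact e_zero
    rw [Finset.sum_congr rfl (fun i _ => step i)]
    funext k
    rw [Finset.sum_apply]
    simp only [apply_ite (fun (f : Fin w → ZMod 2) => f k), Pi.one_apply, Pi.zero_apply]
    rw [bool_parity]
  -- sum of a shares
  have hA : (∑ i, e (a i)) = (∑ i, e (y i)) * (∑ i, e (m i)) := by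
    have hai : ∀ i, e (a i) = e (y i) * e (m i)
        + (∑ j, if j < i then e (r j i) + e (y i) * e (m j) + e (y j) * e (m i) else 0)
        + (∑ j, if i < j then e (r i j) else 0) := by
      intro i
      rw [ha i, e_xor, e_xor, e_and, e_xorSum, e_xorSum]
      congr 1
      · congr 1
        refine Finset.sum_congr rfl fun j _ => ?_
        rw [e_ite]
        split
        · rw [e_xor, e_xor, e_and, e_and]
        · rfl
      · exact Finset.sum_congr rfl fun j _ => e_ite _ _
    rw [Finset.sum_congr rfl (fun i _ => hai i), Finset.sum_add_distrib,
      Finset.sum_add_distrib]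
    -- split the middle triple sum
    have hsplit : (∑ i, ∑ j, if j < i then e (r j i) + e (y i) * e (m j) + e (y j) * e (m i) else 0)
        = (∑ i, ∑ j, if j < i then e (r j i) else 0)
        + (∑ i, ∑ j, if j < i then e (y i) * e (m j) else 0)
        + (∑ i, ∑ j, if j < i then e (y j) * e (m i) else 0) := by
      rw [← Finset.sum_add_distrib, ← Finset.sum_add_distrib]
      refine Finset.sum_congr rfl fun i _ => ?_
      rw [← Finset.sum_add_distrib, ← Finset.sum_add_distrib]
      refine Finset.sum_congr rfl fun j _ => ?_
      split <;> simp
    rw [hsplit]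
    -- cancel randomness
    have hR : (∑ i, ∑ j, if j < i then e (r j i) else 0)
        = ∑ i, ∑ j, if i < j then e (r i j) else 0 := Finset.sum_comm ..
    -- trichotomy expansion of the product
    have hprod : (∑ i, e (y i)) * (∑ i, e (m i))
        = (∑ i, e (y i) * e (m i))
        + (∑ i, ∑ j, if j < i then e (y i) * e (m j) else 0)
        + (∑ i, ∑ j, if i < j then e (y i) * e (m j) else 0) := by
      rw [Finset.sum_mul_sum]
      exact trichot _
    have hswap : (∑ i, ∑ j, if i < j then e (y i) * e (m j) else 0)
        = ∑ i, ∑ j, if j < i then e (y j) * e (m i) else 0 := Finset.sum_comm ..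
    rw [hprod, hswap, hR]
    abel_nf
    simp only [two_nsmul, two_zsmul]
    rw [add_self]
    abel
  -- finish
  have hD : (∑ i, e (d i)) = 0 := by
    rw [← e_xorSum, hd, e_zero]
  have hL : e (xorSum s) = (∑ i, e (x i)) + (∑ i, e (y i)) * (∑ i, e (m i)) := by
    rw [e_xorSum]
    have : ∀ i, e (s i) = e (x i) + e (a i) + e (d i) := by
      intro i; rw [hs i, e_xor, e_xor]
    rw [Finset.sum_congr rfl (fun i _ => this i), Finset.sum_add_distrib,
      Finset.sum_add_distrib, hD, add_zero, hA]
  rw [hL, hM]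
  cases h : xorFoldBool β
  · simp [e_xorSum]
  · simp [e_xor, e_xorSum]
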